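/- Assume (G), (L) and (M), suppose there exists r1 > 0 with M(r1,L) > R0, and let μ > 1. Then there exist R2 > 0 and N ∈ ℕ such that for every R > R2 and every integer n ≥ N, M( 2^n · M^n(R,L), L ) > ( 2^{n+1} · M^{n+1}(R,L) )^μ. -/

import Mathlib

/-- The maximum modulus `M(r,g) = max_{‖x‖ = r} ‖g(x)‖` (as a supremum). -/
noncomputable def maxMod {m : ℕ} (g : EuclideanSpace ℝ (Fin m) → EuclideanSpace ℝ (Fin m))
    (r : ℝ) : ℝ :=
  sSup ((fun x => ‖g x‖) '' {x : EuclideanSpace ℝ (Fin m) | ‖x‖ = r})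

/-- The iterated maximum modulus: `M^0(R,g) = R`, `M^{n+1}(R,g) = M(M^n(R,g), g)`. -/
noncomputable def iterMaxMod {m : ℕ} (g : EuclideanSpace ℝ (Fin m) → EuclideanSpace ℝ (Fin m))
    (R : ℝ) : ℕ → ℝ
  | 0 => R
  | n + 1 => maxMod g (iterMaxMod g R n)

lemma aux_linear_lt_pow (a : ℝ) (ha : 1 < a) (B C : ℝ) :
    ∃ N : ℕ, ∀ n : ℕ, N ≤ n → B * n + C < a ^ n := by
  set s := Real.sqrt a with hsdef
  have hs1 : 1 < s := by
    rw [hsdef, show (1:ℝ) = Real.sqrt 1 by simp]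
    exact Real.sqrt_lt_sqrt (by norm_num) ha
  have hsq : s ^ 2 = a := Real.sq_sqrt (by linarith)
  obtain ⟨N1, hN1⟩ := pow_unbounded_of_one_lt (R := ℝ) (C + 1) hs1
  obtain ⟨N2, hN2⟩ := pow_unbounded_of_one_lt (R := ℝ) (B / (s - 1)) hs1
  refine ⟨max N1 N2, fun n hn => ?_⟩
  have h1 : s ^ N1 ≤ s ^ n := pow_le_pow_right₀ hs1.le (le_trans (le_max_left _ _) hn)
  have h2 : s ^ N2 ≤ s ^ n := pow_le_pow_right₀ hs1.le (le_trans (le_max_right _ _) hn)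
  have hsn : C + 1 < s ^ n := lt_of_lt_of_le hN1 h1
  have hsb : B / (s - 1) < s ^ n := lt_of_lt_of_le hN2 h2
  have hB : B ≤ s ^ n * (s - 1) := by
    rw [div_lt_iff₀ (by linarith)] at hsb; linarith
  have hbern : 1 + (n : ℝ) * (s - 1) ≤ s ^ n := by
    have := one_add_mul_le_pow (a := s - 1) (by linarith) n
    simpa using this
  have han : a ^ n = s ^ n * s ^ n := by rw [← hsq]; ring
  have hpos : (0:ℝ) < s ^ n := by positivity
  have hn0 : (0:ℝ) ≤ (n : ℝ) := Nat.cast_nonneg n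
  nlinarith [mul_le_mul_of_nonneg_left hbern hpos.le, mul_le_mul_of_nonneg_left hB hn0]

lemma aux_le_maxMod {m : ℕ} (L : EuclideanSpace ℝ (Fin m) → EuclideanSpace ℝ (Fin m))
    (hL : Continuous L) {r : ℝ} {x : EuclideanSpace ℝ (Fin m)} (hx : ‖x‖ = r) :
    ‖L x‖ ≤ maxMod L r := by
  unfold maxMod
  have hset : {x : EuclideanSpace ℝ (Fin m) | ‖x‖ = r} = Metric.sphere 0 r := by
    ext y; simp [mem_sphere_zero_iff_norm]
  have hbdd : BddAbove ((fun x => ‖L x‖) '' {x : EuclideanSpace ℝ (Fin m) | ‖x‖ = r}) := by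
    rw [hset]
    exact (isCompact_sphere (0 : EuclideanSpace ℝ (Fin m)) r).bddAbove_image
      (hL.norm.continuousOn)
  exact le_csSup hbdd ⟨x, hx, rfl⟩

lemma aux_maxMod_attained {m : ℕ} (hm : 1 ≤ m)
    (L : EuclideanSpace ℝ (Fin m) → EuclideanSpace ℝ (Fin m))
    (hL : Continuous L) {r : ℝ} (hr : 0 ≤ r) :
    ∃ x : EuclideanSpace ℝ (Fin m), ‖x‖ = r ∧ maxMod L r = ‖L x‖ := by
  unfold maxMod
  have hset : {x : EuclideanSpace ℝ (Fin m) | ‖x‖ = r} = Metric.sphere 0 r := by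
    ext y; simp [mem_sphere_zero_iff_norm]
  have hne : (Metric.sphere (0 : EuclideanSpace ℝ (Fin m)) r).Nonempty := by
    refine ⟨EuclideanSpace.single ⟨0, by omega⟩ r, ?_⟩
    simp [mem_sphere_zero_iff_norm, EuclideanSpace.norm_single, abs_of_nonneg hr]
  obtain ⟨x, hxmem, hx⟩ := (isCompact_sphere (0 : EuclideanSpace ℝ (Fin m)) r).exists_sSup_image_eq
    hne (hL.norm.continuousOn)
  refine ⟨x, ?_, by rw [hset]; exact hx⟩
  simpa [mem_sphere_zero_iff_norm] using hxmem

/-- Lemma 7.2 of the paper: for the sequence `r_n = 2^n M^n(R,L)` one has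
`M(r_n, L) > r_{n+1}^μ` for all large `R` and `n`. -/
theorem maxMod_beats_mu_power {m : ℕ} (hm : 2 ≤ m) (d K : ℝ) (hK : 1 ≤ K) (hdK : K < d)
    (a b : ℝ) (ha : a = (d / K) ^ ((1 : ℝ) / ((m : ℝ) - 1)))
    (hb : b = (d * K) ^ ((1 : ℝ) / ((m : ℝ) - 1)))
    (R0 C1 C2 : ℝ) (hR0 : 1 ≤ R0) (hC1 : 0 < C1) (hC2 : 1 ≤ C2)
    (hbig : 1 < C1 * R0 ^ (a - 1))
    (f L : EuclideanSpace ℝ (Fin m) → EuclideanSpace ℝ (Fin m))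
    (hlow : ∀ y : EuclideanSpace ℝ (Fin m), R0 < ‖y‖ → C1 * ‖y‖ ^ a ≤ ‖f y‖)
    (hup : ∀ y : EuclideanSpace ℝ (Fin m), ‖f y‖ ≤ C2 * (max ‖y‖ R0) ^ b)
    (hLcont : Continuous L)
    (hfunc : ∀ x : EuclideanSpace ℝ (Fin m), f (L x) = L ((2 : ℝ) • x))
    (hmono : ∀ r s : ℝ, 0 < r → r ≤ s → maxMod L r ≤ maxMod L s)
    (r1 : ℝ) (hr1 : 0 < r1) (hMr1 : R0 < maxMod L r1)
    (μ : ℝ) (hμ : 1 < μ) :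
    ∃ R2 : ℝ, 0 < R2 ∧ ∃ N : ℕ, ∀ R : ℝ, R2 < R → ∀ n : ℕ, N ≤ n →
      ((2 : ℝ) ^ (n + 1) * iterMaxMod L R (n + 1)) ^ μ <
        maxMod L ((2 : ℝ) ^ n * iterMaxMod L R n) := by
  have hm1 : (1:ℝ) < (m:ℝ) := by
    have : (2:ℝ) ≤ (m:ℝ) := by exact_mod_cast hm
    linarith
  have hexp : 0 < (1:ℝ) / ((m:ℝ) - 1) := by
    apply div_pos one_pos; linarith
  have hK0 : (0:ℝ) < K := by linarith
  have hdk : 1 < d / K := (one_lt_div hK0).mpr hdK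
  have ha1 : 1 < a := by
    have hdk0 : 0 < d / K := by linarith
    rw [ha]
    exact (Real.one_lt_rpow_iff_of_pos hdk0).mpr (Or.inl ⟨hdk, hexp⟩)
  have ha10 : (0:ℝ) < a - 1 := by linarith
  obtain ⟨δ, hδdef⟩ : ∃ δ : ℝ, δ = C1 ^ ((1:ℝ) / (a - 1)) := ⟨_, rfl⟩
  have hδ : 0 < δ := by rw [hδdef]; exact Real.rpow_pos_of_pos hC1 _
  have hδa : δ ^ a = δ * C1 := by
    rw [hδdef]
    rw [← Real.rpow_mul hC1.le]
    have h1 : (1:ℝ) / (a - 1) * a = 1 / (a - 1) + 1 := by field_simp; ring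
    rw [h1, Real.rpow_add hC1, Real.rpow_one]
  have hδpow : δ ^ (a - 1) = C1 := by
    rw [hδdef, ← Real.rpow_mul hC1.le]
    have h1 : (1:ℝ) / (a - 1) * (a - 1) = 1 := by field_simp
    rw [h1, Real.rpow_one]
  obtain ⟨γ, hγdef⟩ : ∃ γ : ℝ, γ = δ * R0 := ⟨_, rfl⟩
  have hγpos : 0 < γ := by rw [hγdef]; positivity
  have hγ1 : 1 < γ := by
    by_contra hle
    push_neg at hle
    have h1 : γ ^ (a - 1) ≤ 1 := Real.rpow_le_one hγpos.le hle ha10.le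
    have h2 : γ ^ (a - 1) = C1 * R0 ^ (a - 1) := by
      rw [hγdef, Real.mul_rpow hδ.le (by linarith), hδpow]
    rw [h2] at h1; linarith
  have hlogγ : 0 < Real.log γ := Real.log_pos hγ1
  -- step inequality
  have hstep : ∀ r : ℝ, 0 < r → R0 < maxMod L r →
      C1 * (maxMod L r) ^ a ≤ maxMod L (2 * r) := by
    intro r hr hMr
    obtain ⟨x, hx, hMx⟩ := aux_maxMod_attained (by omega) L hLcont hr.le
    have h2x : ‖(2:ℝ) • x‖ = 2 * r := by
      rw [norm_smul, hx]; norm_num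
    have hlx : R0 < ‖L x‖ := by rw [← hMx]; exact hMr
    calc C1 * (maxMod L r) ^ a = C1 * ‖L x‖ ^ a := by rw [hMx]
      _ ≤ ‖f (L x)‖ := hlow (L x) hlx
      _ = ‖L ((2:ℝ) • x)‖ := by rw [hfunc]
      _ ≤ maxMod L (2 * r) := aux_le_maxMod L hLcont h2x
  -- growth of u ↦ C1 u^a
  have hgrow : ∀ u : ℝ, R0 < u → u < C1 * u ^ a := by
    intro u hu
    have hu0 : (0:ℝ) < u := by linarith
    have h1 : R0 ^ (a - 1) ≤ u ^ (a - 1) :=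
      Real.rpow_le_rpow (by linarith) hu.le ha10.le
    have h2 : u ^ a = u ^ (a - 1) * u := by
      have := Real.rpow_add_one hu0.ne' (a - 1)
      rwa [sub_add_cancel] at this
    have h3 : 1 < C1 * u ^ (a - 1) :=
      lt_of_lt_of_le hbig (mul_le_mul_of_nonneg_left h1 hC1.le)
    nlinarith [mul_lt_mul_of_pos_right h3 hu0]
  -- iterated doubling
  have hiter : ∀ r : ℝ, 0 < r → R0 < maxMod L r → ∀ k : ℕ,
      R0 < maxMod L (2 ^ k * r) ∧
      (δ * maxMod L r) ^ (a ^ k) ≤ δ * maxMod L (2 ^ k * r) := by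
    intro r hr hMr k
    induction k with
    | zero =>
        constructor
        · simpa using hMr
        · simp [Real.rpow_one]
    | succ k ih =>
        obtain ⟨ihR, ihw⟩ := ih
        have hrk : (0:ℝ) < 2 ^ k * r := by positivity
        have h2 : (2:ℝ) ^ (k+1) * r = 2 * (2 ^ k * r) := by ring
        have hst := hstep _ hrk ihR
        have hgt := hgrow _ ihR
        have hu0 : (0:ℝ) < maxMod L (2 ^ k * r) := by linarith
        constructor
        · rw [h2]; linarith
        · rw [h2]
          have hbase0 : (0:ℝ) ≤ δ * maxMod L r := mul_nonneg hδ.le (by linarith)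
          calc (δ * maxMod L r) ^ (a ^ (k+1))
              = ((δ * maxMod L r) ^ (a ^ k)) ^ a := by
                rw [pow_succ, Real.rpow_mul hbase0]
            _ ≤ (δ * maxMod L (2 ^ k * r)) ^ a :=
                Real.rpow_le_rpow (Real.rpow_nonneg hbase0 _) ihw (by linarith)
            _ = δ ^ a * (maxMod L (2 ^ k * r)) ^ a := Real.mul_rpow hδ.le hu0.le
            _ = δ * (C1 * (maxMod L (2 ^ k * r)) ^ a) := by rw [hδa]; ring
            _ ≤ δ * maxMod L (2 * (2 ^ k * r)) := mul_le_mul_of_nonneg_left hst hδ.le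
  -- choose the escape radius R2
  obtain ⟨N3, hN3⟩ := aux_linear_lt_pow a ha1 (Real.log 2 / Real.log γ)
    ((Real.log δ + Real.log r1) / Real.log γ)
  obtain ⟨k1, hk1⟩ := pow_unbounded_of_one_lt (R := ℝ) ((R0 + 1) / r1) (by norm_num : (1:ℝ) < 2)
  obtain ⟨k₀, hk₀def⟩ : ∃ k₀ : ℕ, k₀ = max N3 k1 := ⟨_, rfl⟩
  obtain ⟨R2, hR2def⟩ : ∃ R2 : ℝ, R2 = (2:ℝ) ^ k₀ * r1 := ⟨_, rfl⟩
  have hR2pos : 0 < R2 := by rw [hR2def]; positivity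
  have hR0R2 : R0 + 1 < R2 := by
    have h1 : ((R0 + 1) / r1) < 2 ^ k₀ :=
      lt_of_lt_of_le hk1 (pow_le_pow_right₀ (by norm_num) (by rw [hk₀def]; exact le_max_right _ _))
    rw [div_lt_iff₀ hr1] at h1
    rw [hR2def]; linarith
  have hMR2 : R2 < maxMod L R2 := by
    obtain ⟨-, hw⟩ := hiter r1 hr1 hMr1 k₀
    rw [← hR2def] at hw
    have hγle : γ ≤ δ * maxMod L r1 := by
      rw [hγdef]
      exact mul_le_mul_of_nonneg_left (by linarith) hδ.le
    have h1 : γ ^ ((a:ℝ) ^ k₀) ≤ (δ * maxMod L r1) ^ (a ^ k₀) :=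
      Real.rpow_le_rpow hγpos.le hγle (by positivity)
    have hlog : Real.log (δ * R2) < (a ^ k₀) * Real.log γ := by
      have hkey := hN3 k₀ (by rw [hk₀def]; exact le_max_left _ _)
      have h4 := mul_lt_mul_of_pos_right hkey hlogγ
      have h5 : (Real.log 2 / Real.log γ * k₀ +
          (Real.log δ + Real.log r1) / Real.log γ) * Real.log γ
          = Real.log δ + k₀ * Real.log 2 + Real.log r1 := by
        field_simp; ring
      rw [h5] at h4
      have h6 : Real.log (δ * R2) = Real.log δ + k₀ * Real.log 2 + Real.log r1 := by
        rw [hR2def, Real.log_mul hδ.ne' (by positivity),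
          Real.log_mul (by positivity) hr1.ne', Real.log_pow]
        ring
      rw [h6]; linarith
    have h2 : δ * R2 < γ ^ ((a:ℝ) ^ k₀) :=
      (Real.lt_rpow_iff_log_lt (by positivity) hγpos).mpr hlog
    have h3 : γ ^ ((a:ℝ) ^ k₀) ≤ δ * maxMod L R2 := le_trans h1 hw
    have : δ * R2 < δ * maxMod L R2 := lt_of_lt_of_le h2 h3
    exact lt_of_mul_lt_mul_left this hδ.le
  have hEsc : ∀ r : ℝ, R2 ≤ r → R2 < maxMod L r := fun r hr =>
    lt_of_lt_of_le hMR2 (hmono R2 r hR2pos hr)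
  -- choose N
  obtain ⟨N4, hN4⟩ := aux_linear_lt_pow a ha1 (μ * Real.log 2 / Real.log γ)
    ((μ * Real.log γ + (1 - μ) * Real.log δ + μ * Real.log 2) / Real.log γ)
  obtain ⟨N5, hN5⟩ := pow_unbounded_of_one_lt (R := ℝ) μ ha1
  refine ⟨R2, hR2pos, max N4 N5, ?_⟩
  intro R hR n hn
  have hs : ∀ j : ℕ, R2 < iterMaxMod L R j := by
    intro j; induction j with
    | zero => exact hR
    | succ j ih =>
        have := hEsc (iterMaxMod L R j) ih.le
        simpa [iterMaxMod] using this
  obtain ⟨t, htdef⟩ : ∃ t : ℝ, t = maxMod L (iterMaxMod L R n) := ⟨_, rfl⟩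
  have hts : iterMaxMod L R (n+1) = t := by rw [htdef]; simp [iterMaxMod]
  have htR2 : R2 < t := by
    have := hs (n+1); rwa [hts] at this
  have htR0 : R0 < t := by linarith
  have hsn : 0 < iterMaxMod L R n := lt_trans hR2pos (hs n)
  obtain ⟨-, hw⟩ := hiter (iterMaxMod L R n) hsn (by rw [← htdef]; exact htR0) n
  rw [← htdef] at hw
  rw [hts]
  have ht0 : (0:ℝ) < t := by linarith
  have hδt : 0 < δ * t := mul_pos hδ ht0
  have hγδt : γ ≤ δ * t := by
    rw [hγdef]; exact mul_le_mul_of_nonneg_left htR0.le hδ.le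
  have hμan : μ ≤ a ^ n := le_trans hN5.le
    (pow_le_pow_right₀ ha1.le (le_trans (le_max_right _ _) hn))
  have h2pos : (0:ℝ) < (2:ℝ) ^ (n+1) := by positivity
  have hkey : δ ^ ((1:ℝ) - μ) * ((2:ℝ) ^ (n+1)) ^ μ < γ ^ (a ^ n - μ) := by
    rw [Real.lt_rpow_iff_log_lt (by positivity) hγpos]
    rw [Real.log_mul (by positivity) (by positivity), Real.log_rpow hδ,
      Real.log_rpow h2pos, Real.log_pow]
    have hkey4 := hN4 n (le_trans (le_max_left _ _) hn)
    have h4 := mul_lt_mul_of_pos_right hkey4 hlogγ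
    have h5 : (μ * Real.log 2 / Real.log γ * n +
        (μ * Real.log γ + (1 - μ) * Real.log δ + μ * Real.log 2) / Real.log γ) * Real.log γ
        = μ * Real.log γ + (1 - μ) * Real.log δ + μ * Real.log 2 + n * (μ * Real.log 2) := by
      field_simp; ring
    rw [h5] at h4
    have hc : ((n + 1 : ℕ) : ℝ) = (n : ℝ) + 1 := by push_cast; ring
    rw [hc]
    have he1 : (a ^ n - μ) * Real.log γ = a ^ n * Real.log γ - μ * Real.log γ := by ring
    have he2 : μ * (((n : ℝ) + 1) * Real.log 2)
        = μ * Real.log 2 + (n : ℝ) * (μ * Real.log 2) := by ring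
    rw [he1, he2]
    linarith
  have hsplit : (δ * t) ^ (a ^ n) = (δ * t) ^ (a ^ n - μ) * (δ * t) ^ μ := by
    rw [← Real.rpow_add hδt, sub_add_cancel]
  have hmono2 : γ ^ (a ^ n - μ) ≤ (δ * t) ^ (a ^ n - μ) :=
    Real.rpow_le_rpow hγpos.le hγδt (by linarith)
  have hδtμ : (δ * t) ^ μ = δ ^ μ * t ^ μ := Real.mul_rpow hδ.le ht0.le
  have hLHS : ((2:ℝ) ^ (n+1) * t) ^ μ = ((2:ℝ) ^ (n+1)) ^ μ * t ^ μ :=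
    Real.mul_rpow h2pos.le ht0.le
  have htμ : 0 < t ^ μ := Real.rpow_pos_of_pos ht0 μ
  have hδμ : 0 < δ ^ μ := Real.rpow_pos_of_pos hδ μ
  have h7 : δ ^ ((1:ℝ) - μ) * δ ^ μ = δ := by
    rw [← Real.rpow_add hδ]; norm_num
  have hmain : δ * (((2:ℝ) ^ (n+1) * t) ^ μ) < (δ * t) ^ (a ^ n) := by
    rw [hLHS, hsplit, hδtμ]
    have h6 : δ ^ ((1:ℝ) - μ) * ((2:ℝ) ^ (n+1)) ^ μ * (δ ^ μ * t ^ μ) <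
        γ ^ (a ^ n - μ) * (δ ^ μ * t ^ μ) :=
      mul_lt_mul_of_pos_right hkey (by positivity)
    calc δ * (((2:ℝ) ^ (n+1)) ^ μ * t ^ μ)
        = δ ^ ((1:ℝ) - μ) * ((2:ℝ) ^ (n+1)) ^ μ * (δ ^ μ * t ^ μ) := by
          conv_lhs => rw [← h7]
          ring
      _ < γ ^ (a ^ n - μ) * (δ ^ μ * t ^ μ) := h6
      _ ≤ (δ * t) ^ (a ^ n - μ) * (δ ^ μ * t ^ μ) :=
          mul_le_mul_of_nonneg_right hmono2 (by positivity)
  exact (mul_lt_mul_iff_right₀ hδ).mp (lt_of_lt_of_le hmain hw)
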